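/- Let q ∈ ℂ* with q^c u_i = u_j for nonzero u_i, u_j, where 0 ≤ c < n - 1, and suppose q^(c+1) ≠ 1. Then both the multipartition λ with the single row (n) in position i (empty elsewhere) and the multipartition μ with the hook (n-1, 1) in position i (empty elsewhere) are not Kleshchev with respect to the parameters (q; u_1, …, u_m). -/

import Mathlib

/-- A partition function: weakly decreasing row lengths. -/
def IsPartitionFun (lam : ℕ → ℕ) : Prop := ∀ i, lam (i + 1) ≤ lam i

/-- `lam` is a partition of `n`. -/
def IsPartitionOf (lam : ℕ → ℕ) (n : ℕ) : Prop :=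
  IsPartitionFun lam ∧ (Function.support lam).Finite ∧ ∑ᶠ i, lam i = n

/-- Residue of the node in (0-based) row `i`, column `j`: `u * q ^ (j - i)`. -/
noncomputable def resid (u q : ℂ) (i j : ℕ) : ℂ := u * q ^ ((j : ℤ) - (i : ℤ))

/-- Multiplicity of `z` in the multiset of residues (the content) of `lam`. -/
noncomputable def contCount (lam : ℕ → ℕ) (u q z : ℂ) : ℕ :=
  Set.ncard {p : ℕ × ℕ | p.2 < lam p.1 ∧ resid u q p.1 p.2 = z}

/-- The multiplicative order of `q` is at least `N` (or infinite). -/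
def OrderAtLeast (q : ℂ) (N : ℕ) : Prop := ∀ k : ℕ, 0 < k → k < N → q ^ k ≠ 1

/-- The node at the end of row `x.2` of component `x.1` is removable. -/
def IsRemovable {m : ℕ} (lam : Fin m → ℕ → ℕ) (x : Fin m × ℕ) : Prop :=
  0 < lam x.1 x.2 ∧ lam x.1 (x.2 + 1) < lam x.1 x.2

/-- Residue of the removable node at the end of row `x.2` of component `x.1`. -/
noncomputable def remRes {m : ℕ} (lam : Fin m → ℕ → ℕ) (u : Fin m → ℂ) (q : ℂ)
    (x : Fin m × ℕ) : ℂ := resid (u x.1) q x.2 (lam x.1 x.2 - 1)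

/-- A node can be added at the end of row `x.2` of component `x.1`. -/
def IsAddable {m : ℕ} (lam : Fin m → ℕ → ℕ) (x : Fin m × ℕ) : Prop :=
  x.2 = 0 ∨ lam x.1 x.2 < lam x.1 (x.2 - 1)

/-- Residue of the addable node at the end of row `x.2` of component `x.1`. -/
noncomputable def addRes {m : ℕ} (lam : Fin m → ℕ → ℕ) (u : Fin m → ℂ) (q : ℂ)
    (x : Fin m × ℕ) : ℂ := resid (u x.1) q x.2 (lam x.1 x.2)

/-- `y` is below `x`: later component, or same component and lower row. -/
def NodeBelow {m : ℕ} (x y : Fin m × ℕ) : Prop :=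
  x.1 < y.1 ∨ (x.1 = y.1 ∧ x.2 < y.2)

/-- A removable node `x` of residue `a` is normal if for every addable `a`-node
`y` below it, there are more removable `a`-nodes between `x` and `y` than
addable `a`-nodes. -/
noncomputable def IsNormal {m : ℕ} (lam : Fin m → ℕ → ℕ) (u : Fin m → ℂ) (q : ℂ)
    (a : ℂ) (x : Fin m × ℕ) : Prop :=
  IsRemovable lam x ∧ remRes lam u q x = a ∧
  ∀ y, IsAddable lam y → addRes lam u q y = a → NodeBelow x y →
    Set.ncard {z | IsRemovable lam z ∧ remRes lam u q z = a ∧ NodeBelow x z ∧ NodeBelow z y} >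
    Set.ncard {z | IsAddable lam z ∧ addRes lam u q z = a ∧ NodeBelow x z ∧ NodeBelow z y}

/-- A good `a`-node is the highest normal `a`-node. -/
noncomputable def IsGood {m : ℕ} (lam : Fin m → ℕ → ℕ) (u : Fin m → ℂ) (q : ℂ)
    (a : ℂ) (x : Fin m × ℕ) : Prop :=
  IsNormal lam u q a x ∧ ∀ y, IsNormal lam u q a y → y = x ∨ NodeBelow x y

/-- Remove the (removable) node at the end of row `x.2` of component `x.1`. -/
def removeNode {m : ℕ} (lam : Fin m → ℕ → ℕ) (x : Fin m × ℕ) : Fin m → ℕ → ℕ :=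
  fun t r => if t = x.1 ∧ r = x.2 then lam t r - 1 else lam t r

/-- Kleshchev multipartitions: the empty one is Kleshchev, and `lam` is
Kleshchev iff it becomes Kleshchev after removing some good node. -/
inductive Kleshchev {m : ℕ} (u : Fin m → ℂ) (q : ℂ) : (Fin m → ℕ → ℕ) → Prop
  | empty : Kleshchev u q (fun _ _ => 0)
  | step (lam : Fin m → ℕ → ℕ) (a : ℂ) (x : Fin m × ℕ) :
      IsGood lam u q a x → Kleshchev u q (removeNode lam x) → Kleshchev u q lam

/-- The multipartition with a single row of length `k` in component `i`. -/
def rowF (m : ℕ) (i : Fin m) (k : ℕ) : Fin m → ℕ → ℕ :=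
  fun t r => if t = i ∧ r = 0 then k else 0

/-- The multipartition with the hook `(k, 1)` in component `i`. -/
def hookF (m : ℕ) (i : Fin m) (k : ℕ) : Fin m → ℕ → ℕ :=
  fun t r => if t = i then (if r = 0 then k else if r = 1 then 1 else 0) else 0

theorem kleshchev_aux {m : ℕ} (q : ℂ) (u : Fin m → ℂ) (hq0 : q ≠ 0)
    (i j : Fin m) (hij : i < j) (hui : u i ≠ 0)
    (c : ℕ) (hrel : q ^ c * u i = u j) (hqc : q ^ (c + 1) ≠ 1) :
    ∀ lam, Kleshchev u q lam →
      ¬ ∃ k, c + 1 ≤ k ∧ (lam = rowF m i k ∨ lam = hookF m i k) := by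
  have hji : j ≠ i := hij.ne'
  have hremRow : ∀ (K : ℕ) (z : Fin m × ℕ), IsRemovable (rowF m i K) z → z = (i, 0) := by
    rintro K ⟨z1, z2⟩ ⟨h1, -⟩
    by_cases h : z1 = i ∧ z2 = 0
    · exact Prod.ext h.1 h.2
    · simp [rowF, h] at h1
  have hremHook : ∀ (K : ℕ) (z : Fin m × ℕ), IsRemovable (hookF m i K) z →
      (z = (i, 0) ∧ 2 ≤ K) ∨ z = (i, 1) := by
    rintro K ⟨z1, z2⟩ ⟨h1, h2⟩
    simp only [hookF] at h1 h2
    by_cases hz1 : z1 = i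
    · simp only [hz1, if_pos rfl] at h1 h2
      rcases Nat.lt_or_ge z2 2 with h | h
      · interval_cases z2
        · left
          exact ⟨Prod.ext hz1 rfl, by simp at h2; omega⟩
        · right; exact Prod.ext hz1 rfl
      · exfalso
        split_ifs at h1 <;> omega
    · simp [hz1] at h1
  intro lam hK
  induction hK with
  | empty =>
      rintro ⟨k, hk, h | h⟩ <;>
      · have h0 := congrFun (congrFun h i) 0
        simp [rowF, hookF] at h0
        omega
  | step lam a x hgood hK ih =>
      rintro ⟨k, hk, hcase | hcase⟩ <;> subst hcase
      · -- row case
        obtain ⟨⟨hrem, hres, hcount⟩, -⟩ := hgood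
        obtain rfl := hremRow k x hrem
        have hkne : k ≠ c + 1 := by
          intro hk1; subst hk1
          have ha : a = u j := by
            rw [← hres, ← hrel]
            simp [remRes, resid, rowF, zpow_natCast]
            ring
          have hadd : addRes (rowF m i (c + 1)) u q (j, 0) = a := by
            simp [addRes, resid, rowF, hji, ha]
          have hcnt := hcount (j, 0) (Or.inl rfl) hadd (Or.inl hij)
          have hemp : {z | IsRemovable (rowF m i (c + 1)) z ∧
              remRes (rowF m i (c + 1)) u q z = a ∧ NodeBelow (i, (0 : ℕ)) z ∧
              NodeBelow z (j, (0 : ℕ))} = ∅ := by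
            rw [Set.eq_empty_iff_forall_notMem]
            rintro z ⟨hzr, -, hb, -⟩
            obtain rfl := hremRow _ z hzr
            simp [NodeBelow] at hb
          rw [hemp, Set.ncard_empty] at hcnt
          omega
        apply ih
        refine ⟨k - 1, by omega, Or.inl ?_⟩
        funext t r
        by_cases h : t = i ∧ r = 0 <;> simp [removeNode, rowF, h]
      · -- hook case
        obtain ⟨⟨hrem, hres, hcount⟩, -⟩ := hgood
        rcases hremHook k x hrem with ⟨rfl, hk2⟩ | rfl
        · -- x = (i, 0), k ≥ 2
          have hkne : k ≠ c + 1 := by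
            intro hk1; subst hk1
            have ha : a = u j := by
              rw [← hres, ← hrel]
              simp [remRes, resid, hookF, zpow_natCast]
              ring
            have hadd : addRes (hookF m i (c + 1)) u q (j, 0) = a := by
              simp [addRes, resid, hookF, hji, ha]
            have hcnt := hcount (j, 0) (Or.inl rfl) hadd (Or.inl hij)
            have hemp : {z | IsRemovable (hookF m i (c + 1)) z ∧
                remRes (hookF m i (c + 1)) u q z = a ∧ NodeBelow (i, (0 : ℕ)) z ∧
                NodeBelow z (j, (0 : ℕ))} = ∅ := by
              rw [Set.eq_empty_iff_forall_notMem]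
              rintro z ⟨hzr, hzres, hb, -⟩
              rcases hremHook _ z hzr with ⟨rfl, -⟩ | rfl
              · simp [NodeBelow] at hb
              · rw [ha, ← hrel] at hzres
                have h1 : u i * q⁻¹ = q ^ c * u i := by
                  simpa [remRes, resid, hookF] using hzres
                have h2 : u i = q ^ (c + 1) * u i := by
                  calc u i = u i * q⁻¹ * q := by field_simp
                  _ = q ^ c * u i * q := by rw [h1]
                  _ = q ^ (c + 1) * u i := by ring
                have h3 : (1 : ℂ) * u i = q ^ (c + 1) * u i := by rw [one_mul]; exact h2
                exact hqc (mul_right_cancel₀ hui h3).symm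
            rw [hemp, Set.ncard_empty] at hcnt
            omega
          apply ih
          refine ⟨k - 1, by omega, Or.inr ?_⟩
          funext t r
          by_cases h1 : t = i
          · subst h1
            rcases eq_or_ne r 0 with rfl | hr0
            · simp [removeNode, hookF]
            · rcases eq_or_ne r 1 with rfl | hr1
              · simp [removeNode, hookF]
              · simp [removeNode, hookF, hr0, hr1]
          · simp [removeNode, hookF, h1]
        · -- x = (i, 1)
          apply ih
          refine ⟨k, hk, Or.inl ?_⟩
          funext t r
          by_cases h1 : t = i
          · subst h1
            rcases eq_or_ne r 0 with rfl | hr0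
            · simp [removeNode, hookF, rowF]
            · rcases eq_or_ne r 1 with rfl | hr1
              · simp [removeNode, hookF, rowF]
              · simp [removeNode, hookF, rowF, hr0, hr1]
          · simp [removeNode, hookF, rowF, h1]

/-- If `q ^ c * u i = u j` with `0 ≤ c < n - 1`, `i < j` and `q ^ (c+1) ≠ 1`,
then neither the multipartition with the single row `(n)` in position `i`, nor
the one with the hook `(n-1, 1)` in position `i` (empty elsewhere), is
Kleshchev. -/
theorem stmt17 (n m : ℕ) (hn : 2 ≤ n) (q : ℂ) (u : Fin m → ℂ)
    (hq0 : q ≠ 0) (hq1 : q ≠ 1) (hu : ∀ t, u t ≠ 0)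
    (i j : Fin m) (hij : i < j)
    (c : ℕ) (hc : c < n - 1) (hrel : q ^ c * u i = u j)
    (hqc : q ^ (c + 1) ≠ 1) :
    ¬ Kleshchev u q (fun t r => if t = i ∧ r = 0 then n else 0) ∧
    ¬ Kleshchev u q (fun t r =>
        if t = i then (if r = 0 then n - 1 else if r = 1 then 1 else 0) else 0) := by
  constructor
  · intro h
    exact kleshchev_aux q u hq0 i j hij (hu i) c hrel hqc _ h
      ⟨n, by omega, Or.inl rfl⟩
  · intro h
    exact kleshchev_aux q u hq0 i j hij (hu i) c hrel hqc _ h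
      ⟨n - 1, by omega, Or.inr rfl⟩
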